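/- arXiv:2310.01032 — 3 statements merged into one kernel-verified Lean document; each statement's English description precedes it below -/
import Mathlib

section
/- The real bilinear form (ξ, η) ↦ α·Re(tr(Σ⁻¹ ξ Σ⁻¹ η)) + β·Re(tr(Σ⁻¹ ξ)·tr(Σ⁻¹ η)) on p×p Hermitian matrices is positive definite whenever α > 0 and β > −α/p. -/
open scoped ComplexOrder
open Matrix

/-- The bilinear form `(ξ, η) ↦ α Re tr(Σ⁻¹ξΣ⁻¹η) + β Re(tr(Σ⁻¹ξ) tr(Σ⁻¹η))`
on Hermitian matrices is positive definite when `α > 0` and `β > -α/p`. -/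
theorem metric_pos_def (p : ℕ) (S : Matrix (Fin p) (Fin p) ℂ) (hS : S.PosDef)
    (α β : ℝ) (hα : 0 < α) (hβ : β > -α / p) :
    ∀ ξ : Matrix (Fin p) (Fin p) ℂ, ξ.IsHermitian → ξ ≠ 0 →
      0 < α * ((S⁻¹ * ξ * S⁻¹ * ξ).trace).re
          + β * (((S⁻¹ * ξ).trace * (S⁻¹ * ξ).trace)).re := by
  intro ξ hξ hξ0
  have hp : 0 < p := by
    rcases Nat.eq_zero_or_pos p with h | h
    · exfalso; subst h; exact hξ0 (Subsingleton.elim _ _)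
    · exact h
  have hA : (S⁻¹).PosDef := hS.inv
  set R := (open scoped MatrixOrder in CFC.sqrt (S⁻¹)) with hRdef
  have hRR : R * R = S⁻¹ := by
    open scoped MatrixOrder in exact CFC.sqrt_mul_sqrt_self _ hA.posSemidef.nonneg
  have hRherm : R.IsHermitian := by
    open scoped MatrixOrder in exact (CFC.sqrt_nonneg _).posSemidef.1
  clear_value R
  set M := R * ξ * R with hMdef
  have hMherm : M.IsHermitian := by
    have := isHermitian_mul_mul_conjTranspose R hξ
    rwa [hRherm.eq] at this
  -- R is invertible
  have hRunit : IsUnit R.det := by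
    have hdet : R.det * R.det = (S⁻¹).det := by rw [← det_mul, hRR]
    have hne : (S⁻¹).det ≠ 0 := hA.det_pos.ne'
    exact isUnit_iff_ne_zero.2 (fun h => hne (by rw [← hdet, h, mul_zero]))
  have hM0 : M ≠ 0 := by
    intro h
    apply hξ0
    have key : R⁻¹ * M * R⁻¹ = ξ := by
      rw [hMdef, show R⁻¹ * (R * ξ * R) * R⁻¹ = R⁻¹ * R * (ξ * (R * R⁻¹)) by
        simp [mul_assoc], mul_nonsing_inv R hRunit, nonsing_inv_mul R hRunit]
      simp
    rw [← key, h, mul_zero, zero_mul]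
  -- trace identities
  have h1 : (S⁻¹ * ξ * S⁻¹ * ξ).trace = (M * M).trace := by
    rw [← hRR, hMdef]
    rw [show R * R * ξ * (R * R) * ξ = R * (R * ξ * R * (R * ξ)) by
      simp [mul_assoc]]
    rw [trace_mul_comm]
    simp [mul_assoc]
  have h2 : (S⁻¹ * ξ).trace = M.trace := by
    rw [← hRR, hMdef, mul_assoc, trace_mul_comm]
  rw [h1, h2]
  -- entrywise computations
  have htr2 : ((M * M).trace).re = ∑ j, ∑ i, Complex.normSq (M i j) := by
    rw [show M * M = Mᴴ * M from by rw [hMherm.eq]]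
    simp only [trace, diag, mul_apply, conjTranspose_apply, Complex.re_sum]
    refine Finset.sum_congr rfl fun j _ => Finset.sum_congr rfl fun i _ => ?_
    simp [Complex.mul_re, Complex.normSq_apply]
  have hdiag : ∀ i, (M i i).im = 0 := fun i => by
    have h := congrFun (congrFun hMherm.eq i) i
    rw [conjTranspose_apply] at h
    have h2 := congrArg Complex.im h
    simp at h2
    linarith
  have htr : (M.trace).im = 0 := by
    simp only [trace, diag]
    rw [Complex.im_sum]
    exact Finset.sum_eq_zero fun i _ => hdiag i
  set t : ℝ := (M.trace).re with ht
  have htre : ((M.trace * M.trace)).re = t * t := by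
    rw [Complex.mul_re, htr]; ring
  rw [htre, htr2]
  set s : ℝ := ∑ j, ∑ i, Complex.normSq (M i j) with hs
  -- s > 0
  have hspos : 0 < s := by
    have hex : ∃ i j, M i j ≠ 0 := by
      by_contra h
      push_neg at h
      exact hM0 (by ext i j; exact h i j)
    obtain ⟨i, j, hij⟩ := hex
    calc (0:ℝ) < Complex.normSq (M i j) := Complex.normSq_pos.2 hij
      _ ≤ ∑ i', Complex.normSq (M i' j) :=
          Finset.single_le_sum (f := fun i' => Complex.normSq (M i' j))
            (fun k _ => Complex.normSq_nonneg _) (Finset.mem_univ i)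
      _ ≤ s := Finset.single_le_sum (f := fun j' => ∑ i', Complex.normSq (M i' j'))
          (fun k _ => Finset.sum_nonneg fun l _ => Complex.normSq_nonneg _)
          (Finset.mem_univ j)
  -- t^2 ≤ p * s
  have hts : t ^ 2 ≤ (p : ℝ) * s := by
    have h1' : t = ∑ i, (M i i).re := by
      rw [ht]; simp only [trace, diag]; rw [Complex.re_sum]
    have h2' : (∑ i, (M i i).re) ^ 2 ≤ (p : ℝ) * ∑ i, ((M i i).re) ^ 2 := by
      have := sq_sum_le_card_mul_sum_sq (s := (Finset.univ : Finset (Fin p)))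
        (f := fun i => (M i i).re)
      simpa using this
    have h3' : ∑ j, ((M j j).re) ^ 2 ≤ s := by
      rw [hs]
      refine Finset.sum_le_sum fun j _ => ?_
      calc ((M j j).re) ^ 2 ≤ Complex.normSq (M j j) := by
            rw [Complex.normSq_apply, hdiag j]; nlinarith
        _ ≤ ∑ i, Complex.normSq (M i j) := Finset.single_le_sum
            (f := fun i => Complex.normSq (M i j))
            (fun k _ => Complex.normSq_nonneg _) (Finset.mem_univ j)
    calc t ^ 2 = (∑ i, (M i i).re) ^ 2 := by rw [h1']
      _ ≤ (p : ℝ) * ∑ i, ((M i i).re) ^ 2 := h2'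
      _ ≤ (p : ℝ) * s := mul_le_mul_of_nonneg_left h3' (Nat.cast_nonneg p)
  -- finish
  have hpr : (0 : ℝ) < p := Nat.cast_pos.2 hp
  have hab : 0 < α + β * p := by
    have h1' : -β < α / p := by
      rw [gt_iff_lt, neg_div] at hβ; linarith
    have h2' := (lt_div_iff₀ hpr).1 h1'
    nlinarith
  rcases le_or_gt 0 β with hb | hb
  · nlinarith
  · nlinarith
end

section
/- The curve γ(t) = Σ·exp(t·Σ⁻¹ξ) satisfies the geodesic differential equation γ''(t) − γ'(t)·γ(t)⁻¹·γ'(t) = 0, with γ(0) = Σ and γ'(0) = ξ. -/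
open scoped ComplexOrder
open Matrix NormedSpace

/-- The curve `γ(t) = Σ exp(t Σ⁻¹ ξ)` satisfies the geodesic equation
`γ'' - γ' γ⁻¹ γ' = 0` with `γ(0) = Σ` and `γ'(0) = ξ`, where
`γ'(t) = ξ exp(t Σ⁻¹ ξ)` and `γ''(t) = ξ Σ⁻¹ ξ exp(t Σ⁻¹ ξ)`. -/
theorem geodesic_ode (p : ℕ) (S ξ : Matrix (Fin p) (Fin p) ℂ)
    (hS : S.PosDef) (hξ : ξ.IsHermitian) :
    (∀ t : ℝ,
      ξ * S⁻¹ * ξ * exp ((t : ℂ) • (S⁻¹ * ξ))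
        - (ξ * exp ((t : ℂ) • (S⁻¹ * ξ)))
            * (S * exp ((t : ℂ) • (S⁻¹ * ξ)))⁻¹
            * (ξ * exp ((t : ℂ) • (S⁻¹ * ξ))) = 0) ∧
    S * exp (((0 : ℝ) : ℂ) • (S⁻¹ * ξ)) = S ∧
    ξ * exp (((0 : ℝ) : ℂ) • (S⁻¹ * ξ)) = ξ := by
  refine ⟨fun t => ?_, ?_, ?_⟩
  · have hE : exp ((t : ℂ) • (S⁻¹ * ξ)) * (exp ((t : ℂ) • (S⁻¹ * ξ)))⁻¹ = 1 :=
      Matrix.mul_nonsing_inv _ ((Matrix.isUnit_iff_isUnit_det _).mp (Matrix.isUnit_exp _))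
    rw [Matrix.mul_inv_rev, sub_eq_zero]
    calc ξ * S⁻¹ * ξ * exp ((t : ℂ) • (S⁻¹ * ξ))
        = ξ * (exp ((t : ℂ) • (S⁻¹ * ξ)) * (exp ((t : ℂ) • (S⁻¹ * ξ)))⁻¹)
            * S⁻¹ * (ξ * exp ((t : ℂ) • (S⁻¹ * ξ))) := by
          rw [hE]; noncomm_ring
      _ = ξ * exp ((t : ℂ) • (S⁻¹ * ξ)) * ((exp ((t : ℂ) • (S⁻¹ * ξ)))⁻¹ * S⁻¹)
            * (ξ * exp ((t : ℂ) • (S⁻¹ * ξ))) := by noncomm_ring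
  · simp
  · simp
end

section
/- Second-order retraction stays in the cone: for Σ Hermitian positive definite and ξ Hermitian, the matrix Σ + ξ + (1/2)·ξ·Σ⁻¹·ξ is Hermitian positive definite. -/
open scoped ComplexOrder
open Matrix

lemma half_smul_posDef {n : ℕ} {M : Matrix (Fin n) (Fin n) ℂ} (hM : M.PosDef) :
    ((1 / 2 : ℂ) • M).PosDef := by
  refine ⟨?_, fun x hx => ?_⟩
  · unfold Matrix.IsHermitian
    rw [conjTranspose_smul, hM.1]
    norm_num
  · exact (hM.smul (a := (1 / 2 : ℂ)) (by rw [Complex.lt_def]; norm_num)).2 hx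

lemma half_smul_posSemidef {n : ℕ} {M : Matrix (Fin n) (Fin n) ℂ} (hM : M.PosSemidef) :
    ((1 / 2 : ℂ) • M).PosSemidef := by
  refine ⟨?_, fun x => ?_⟩
  · unfold Matrix.IsHermitian
    rw [conjTranspose_smul, hM.1]
    norm_num
  · exact (hM.smul (a := (1 / 2 : ℂ)) (by rw [Complex.le_def]; norm_num)).2 x

/-- The second-order retraction `Σ + ξ + (1/2) ξ Σ⁻¹ ξ` is Hermitian positive
definite for `Σ` Hermitian positive definite and `ξ` Hermitian. -/
theorem second_order_retraction_posDef (p : ℕ) (S ξ : Matrix (Fin p) (Fin p) ℂ)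
    (hS : S.PosDef) (hξ : ξ.IsHermitian) :
    (S + ξ + (1 / 2 : ℂ) • (ξ * S⁻¹ * ξ)).PosDef := by
  have hinv := hS.isUnit.invertible
  have key : S + ξ + (1 / 2 : ℂ) • (ξ * S⁻¹ * ξ)
      = (1 / 2 : ℂ) • S + (1 / 2 : ℂ) • ((S + ξ)ᴴ * S⁻¹ * (S + ξ)) := by
    have h1 : S * S⁻¹ = 1 := Matrix.mul_inv_of_invertible S
    have h2 : S⁻¹ * S = 1 := Matrix.inv_mul_of_invertible S
    have hH : (S + ξ)ᴴ = S + ξ := by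
      rw [conjTranspose_add, hS.1, hξ]
    rw [hH]
    have expand : (S + ξ) * S⁻¹ * (S + ξ)
        = S + ξ + ξ + ξ * S⁻¹ * ξ := by
      rw [Matrix.add_mul, Matrix.add_mul, h1, Matrix.one_mul, Matrix.mul_add,
        Matrix.mul_assoc ξ S⁻¹ S, h2, Matrix.mul_one]
      abel
    rw [expand, smul_add, smul_add, smul_add]
    module
  rw [key]
  exact (half_smul_posDef hS).add_posSemidef
    (half_smul_posSemidef (hS.inv.posSemidef.conjTranspose_mul_mul_same (S + ξ)))
end
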